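/- For any integer m ≥ 2, the equidistant dimension of the Cartesian product K_2 □ K_m equals m. -/

import Mathlib

open SimpleGraph

/-- A distance-equalizer set: any two vertices outside `D` are equidistant
from some vertex of `D`. -/
def IsDistEqSet {V : Type*} (G : SimpleGraph V) (D : Set V) : Prop :=
  ∀ x ∉ D, ∀ y ∉ D, ∃ w ∈ D, G.dist x w = G.dist y w

/-- The equidistant dimension: minimum cardinality of a distance-equalizer set. -/
noncomputable def eqdim {V : Type*} [Fintype V] (G : SimpleGraph V) : ℕ :=
  sInf {k | ∃ D : Finset V, IsDistEqSet G (D : Set V) ∧ D.card = k}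

section Aux

variable {m : ℕ}

private lemma box_conn (hm : 2 ≤ m) :
    ((⊤ : SimpleGraph (Fin 2)) □ (⊤ : SimpleGraph (Fin m))).Connected := by
  haveI : Nonempty (Fin m) := ⟨⟨0, by omega⟩⟩
  exact connected_boxProd.mpr ⟨connected_top, connected_top⟩

private lemma box_dist (hm : 2 ≤ m) (x y : Fin 2 × Fin m) :
    ((⊤ : SimpleGraph (Fin 2)) □ (⊤ : SimpleGraph (Fin m))).dist x y =
      (if x.1 = y.1 then 0 else 1) + (if x.2 = y.2 then 0 else 1) := by
  set G := (⊤ : SimpleGraph (Fin 2)) □ (⊤ : SimpleGraph (Fin m)) with hG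
  by_cases h1 : x.1 = y.1 <;> by_cases h2 : x.2 = y.2 <;>
    simp only [h1, h2, if_true, if_false, if_pos, if_neg]
  · have : x = y := Prod.ext h1 h2
    simp [this]
  · rw [show (0 : ℕ) + 1 = 1 from rfl, dist_eq_one_iff_adj, hG, boxProd_adj]
    right; exact ⟨h2, h1⟩
  · rw [show (1 : ℕ) + 0 = 1 from rfl, dist_eq_one_iff_adj, hG, boxProd_adj]
    left; exact ⟨h1, h2⟩
  · have hxy : x ≠ y := fun h => h1 (by rw [h])
    have hadj : ¬ G.Adj x y := by
      rw [hG, boxProd_adj]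
      push_neg
      exact ⟨fun _ => h2, fun _ => h1⟩
    have ha1 : G.Adj x (y.1, x.2) := by
      rw [hG, boxProd_adj]; left; exact ⟨h1, rfl⟩
    have ha2 : G.Adj (y.1, x.2) y := by
      rw [hG, boxProd_adj]; right; exact ⟨h2, rfl⟩
    have hle : G.dist x y ≤ 2 :=
      dist_le (Walk.cons ha1 (Walk.cons ha2 Walk.nil))
    have hpos : 0 < G.dist x y := (box_conn hm).pos_dist_of_ne hxy
    have hne1 : G.dist x y ≠ 1 := fun h => hadj (dist_eq_one_iff_adj.mp h)
    omega

end Aux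

theorem stmt_2 (m : ℕ) (hm : 2 ≤ m) :
    eqdim ((⊤ : SimpleGraph (Fin 2)) □ (⊤ : SimpleGraph (Fin m))) = m := by
  set G := (⊤ : SimpleGraph (Fin 2)) □ (⊤ : SimpleGraph (Fin m)) with hG
  have hdist := box_dist hm
  have two : ∀ i : Fin 2, i = 0 ∨ i = 1 := by decide
  have hmpos : 0 < m := by omega
  set last : Fin m := ⟨m - 1, by omega⟩ with hlast
  set f : Fin m → Fin 2 × Fin m := fun j => (if j = last then 1 else 0, j) with hf
  have hfi : Function.Injective f := by
    intro a b hab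
    simpa [hf] using congrArg Prod.snd hab
  set D : Finset (Fin 2 × Fin m) := Finset.univ.image f with hD
  have hcard : D.card = m := by
    rw [hD, Finset.card_image_of_injective _ hfi, Finset.card_univ, Fintype.card_fin]
  have hmemD : ∀ p : Fin 2 × Fin m, p ∈ D ↔ p.1 = (if p.2 = last then 1 else 0) := by
    intro p
    constructor
    · rintro hp
      rw [hD, Finset.mem_image] at hp
      obtain ⟨j, _, hj⟩ := hp
      rw [← hj]
    · intro hp
      rw [hD, Finset.mem_image]
      exact ⟨p.2, Finset.mem_univ _, by simp [hf, Prod.ext_iff, hp]⟩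
  have hform : ∀ p : Fin 2 × Fin m, p.1 ≠ (if p.2 = last then 1 else 0) →
      p.1 = (if p.2 = last then 0 else 1) := by
    intro p hp
    rcases two p.1 with h | h <;> by_cases h2 : p.2 = last <;>
      simp only [h, h2, if_true, if_false] at hp ⊢ <;> first | rfl | exact absurd rfl hp
  have hset : IsDistEqSet G (D : Set (Fin 2 × Fin m)) := by
    intro x hx y hy
    rw [Finset.mem_coe, hmemD] at hx hy
    have hx' := hform x hx
    have hy' := hform y hy
    by_cases hx2 : x.2 = last <;> by_cases hy2 : y.2 = last
    · -- x = y = (0, last)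
      rw [if_pos hx2] at hx'
      rw [if_pos hy2] at hy'
      have hxy : x = y := Prod.ext (by rw [hx', hy']) (by rw [hx2, hy2])
      refine ⟨(1, last), ?_, by rw [hxy]⟩
      rw [Finset.mem_coe, hmemD]; simp
    · -- x = (0,last), y = (1, y.2); take w = (0, y.2)
      rw [if_pos hx2] at hx'
      rw [if_neg hy2] at hy'
      refine ⟨(0, y.2), ?_, ?_⟩
      · rw [Finset.mem_coe, hmemD]; simp [hy2]
      · rw [hdist, hdist]
        have hne : x.2 ≠ y.2 := by rw [hx2]; exact fun h => hy2 h.symm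
        simp [hx', hy', hne]
    · -- symmetric
      rw [if_pos hy2] at hy'
      rw [if_neg hx2] at hx'
      refine ⟨(0, x.2), ?_, ?_⟩
      · rw [Finset.mem_coe, hmemD]; simp [hx2]
      · rw [hdist, hdist]
        have hne : y.2 ≠ x.2 := by rw [hy2]; exact fun h => hx2 h.symm
        simp [hx', hy', hne]
    · -- both rows 1, take w = (1, last)
      rw [if_neg hx2] at hx'
      rw [if_neg hy2] at hy'
      refine ⟨(1, last), ?_, ?_⟩
      · rw [Finset.mem_coe, hmemD]; simp
      · rw [hdist, hdist]
        simp [hx', hy', hx2, hy2]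
  have hmem : m ∈ {k | ∃ D' : Finset (Fin 2 × Fin m),
      IsDistEqSet G (D' : Set (Fin 2 × Fin m)) ∧ D'.card = k} := ⟨D, hset, hcard⟩
  refine le_antisymm (Nat.sInf_le hmem) (le_csInf ⟨m, hmem⟩ ?_)
  rintro k ⟨D', hD', hk⟩
  by_contra hlt
  push_neg at hlt
  -- there's a column not covered by D'
  have himg : (D'.image Prod.snd).card < m := by
    calc (D'.image Prod.snd).card ≤ D'.card := Finset.card_image_le
    _ = k := hk
    _ < m := hlt
  have hex : ∃ c : Fin m, c ∉ D'.image Prod.snd := by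
    by_contra hc
    push_neg at hc
    have : D'.image Prod.snd = Finset.univ := Finset.eq_univ_iff_forall.mpr hc
    rw [this, Finset.card_univ, Fintype.card_fin] at himg
    omega
  obtain ⟨c, hc⟩ := hex
  have hx : ((0 : Fin 2), c) ∉ (D' : Set (Fin 2 × Fin m)) := by
    intro h
    exact hc (Finset.mem_image.mpr ⟨_, Finset.mem_coe.mp h, rfl⟩)
  have hy : ((1 : Fin 2), c) ∉ (D' : Set (Fin 2 × Fin m)) := by
    intro h
    exact hc (Finset.mem_image.mpr ⟨_, Finset.mem_coe.mp h, rfl⟩)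
  obtain ⟨w, hw, heq⟩ := hD' _ hx _ hy
  have hwc : w.2 ≠ c := by
    intro h
    exact hc (Finset.mem_image.mpr ⟨w, Finset.mem_coe.mp hw, h⟩)
  rw [hdist, hdist] at heq
  have hwc' : c ≠ w.2 := fun h => hwc h.symm
  rcases two w.1 with h | h <;> simp [h, hwc'] at heq
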